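/- arXiv:2503.07731 — 4 statements merged into one kernel-verified Lean document; each statement's English description precedes it below -/
import Mathlib

section
/- Let G^{uT} and G^{tT} be n×n complex matrices with G^{tT} invertible, related by (G^{tT})^{-1} - I = ((G^{uT})^{-1} - I)·U₂ where U₂ is the block diagonal matrix diag(I₁, -I₂) (so U₂² = I). Then for any r ≥ 1, det[ ∏_{i=r}^{1} G^{tT}_i · (I + ∏_{i=r}^{1}((G^{tT}_i)^{-1} - I)) ] · ∏_{i=1}^{r} det(Z_i) = det[ ∏_{i=r}^{1} G^{uT}_i · (I + ∏_{i=r}^{1}(((G^{uT}_i)^{-1} - I)U₂)) ], where Z_i = det-factor satisfying det(Z_i G^{tT}_i) = det(G^{uT}_i), i.e. Z_i = det(G^{uT}_i)/det(G^{tT}_i). -/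
open Matrix

/-- Product of matrices in decreasing index order: `G (r-1) * ⋯ * G 0`. -/
noncomputable def prodDesc {n : Type*} [Fintype n] [DecidableEq n] {r : ℕ}
    (G : Fin r → Matrix n n ℂ) : Matrix n n ℂ :=
  ((List.finRange r).reverse.map G).prod

lemma det_prodDesc {n : Type*} [Fintype n] [DecidableEq n] {r : ℕ}
    (G : Fin r → Matrix n n ℂ) : (prodDesc G).det = ∏ i, (G i).det := by
  unfold prodDesc
  rw [← Matrix.coe_detMonoidHom, MonoidHom.map_list_prod, List.map_map,
    List.map_reverse, List.prod_reverse, ← Fin.prod_univ_def]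
  rfl

/-- The twisted Grover determinant times the normalization factors
`Zᵢ = det(G^{uT}ᵢ)/det(G^{tT}ᵢ)` equals the modified Grover determinant built from the
untwisted Green's functions with inserted `U₂` factors, whenever
`(G^{tT}ᵢ)⁻¹ - I = ((G^{uT}ᵢ)⁻¹ - I) U₂` with `U₂² = I`. -/
theorem twisted_grover_eq_modified_grover {n : Type*} [Fintype n] [DecidableEq n]
    (r : ℕ) (hr : 1 ≤ r)
    (Gu Gt : Fin r → Matrix n n ℂ) (U₂ : Matrix n n ℂ) (hU₂ : U₂ * U₂ = 1)
    (hGu : ∀ i, IsUnit (Gu i)) (hGt : ∀ i, IsUnit (Gt i))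
    (hrel : ∀ i, (Gt i)⁻¹ - 1 = ((Gu i)⁻¹ - 1) * U₂) :
    (prodDesc Gt * (1 + prodDesc (fun i => (Gt i)⁻¹ - 1))).det *
      ∏ i, ((Gu i).det / (Gt i).det) =
    (prodDesc Gu * (1 + prodDesc (fun i => ((Gu i)⁻¹ - 1) * U₂))).det := by
  have h2 : (fun i => (Gt i)⁻¹ - 1) = fun i => ((Gu i)⁻¹ - 1) * U₂ := funext hrel
  rw [h2, Matrix.det_mul, Matrix.det_mul, det_prodDesc, det_prodDesc]
  have ht : (∏ i, (Gt i).det) ≠ 0 := by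
    rw [Finset.prod_ne_zero_iff]
    exact fun i _ => ((Matrix.isUnit_iff_isUnit_det _).mp (hGt i)).ne_zero
  rw [Finset.prod_div_distrib]
  field_simp
end

section
/- (Drut reconstruction of the Grover determinant) For i = 1,…,r let G_i be invertible n×n complex matrices and set B_i = G_i^{-1} - I. Define the rn×rn block matrix T with diagonal blocks T_{ii} = G_i, blocks T_{i+1,i} = G_i - I for i = 1,…,r-1, block T_{1,r} = I - G_r, and all other blocks zero. Then det T = det[ ∏_{i=r}^{1} G_i · ( I + ∏_{i=r}^{1} B_i ) ]. -/
open Matrix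

section Aux

variable {n : Type*} [Fintype n] [DecidableEq n] {r : ℕ}

/-- Lift a block-valued function to a big matrix indexed by `Fin r × n`. -/
def blift (F : Fin r → Fin r → Matrix n n ℂ) : Matrix (Fin r × n) (Fin r × n) ℂ :=
  Matrix.of fun p q => F p.1 q.1 p.2 q.2

lemma blift_mul (F H : Fin r → Fin r → Matrix n n ℂ) :
    blift F * blift H = blift (fun i k => ∑ j, F i j * H j k) := by
  ext p q
  simp only [blift, Matrix.mul_apply, Matrix.of_apply, Fintype.sum_prod_type,
    Matrix.sum_apply]

lemma det_blift_upper (F : Fin r → Fin r → Matrix n n ℂ)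
    (h : ∀ i k : Fin r, k < i → F i k = 0) :
    (blift F).det = ∏ a : Fin r, (F a a).det := by
  have hbt : BlockTriangular (blift F) Prod.fst := by
    intro p q hlt
    show F p.1 q.1 p.2 q.2 = 0
    rw [h p.1 q.1 hlt]
    rfl
  rw [hbt.det_fintype]
  refine Finset.prod_congr rfl fun a _ => ?_
  let e : n ≃ {p : Fin r × n // p.1 = a} :=
    { toFun := fun j => ⟨(a, j), rfl⟩
      invFun := fun p => p.1.2
      left_inv := fun j => rfl
      right_inv := fun p => by
        obtain ⟨⟨x, y⟩, hx⟩ := p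
        subst hx
        rfl }
  rw [← Matrix.det_submatrix_equiv_self e]
  congr 1

lemma det_blift_lower (F : Fin r → Fin r → Matrix n n ℂ)
    (h : ∀ i k : Fin r, i < k → F i k = 0) :
    (blift F).det = ∏ a : Fin r, (F a a).det := by
  have hT : (blift F)ᵀ = blift (fun i k => (F k i)ᵀ) := by
    ext p q
    rfl
  rw [← Matrix.det_transpose, hT,
    det_blift_upper _ (fun i k hk => by rw [h k i hk]; rfl)]
  exact Finset.prod_congr rfl fun a _ => Matrix.det_transpose _

end Aux

/-- Drut's reconstruction of the Grover determinant: the determinant of the block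
cyclic bidiagonal matrix `T` (with diagonal blocks `Gᵢ`, subdiagonal blocks `Gᵢ - I`,
and corner block `I - Gᵣ`) equals `det[∏ᵢ Gᵢ (I + ∏ᵢ (Gᵢ⁻¹ - I))]`, with no matrix
inversion on the left-hand side. -/
theorem drut_reconstruction {n : Type*} [Fintype n] [DecidableEq n]
    (r : ℕ) (hr : 2 ≤ r)
    (G : Fin r → Matrix n n ℂ) (hG : ∀ i, IsUnit (G i)) :
    let T : Matrix (Fin r × n) (Fin r × n) ℂ :=
      Matrix.of fun p q =>
        if p.1 = q.1 then G q.1 p.2 q.2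
        else if (p.1 : ℕ) = (q.1 : ℕ) + 1 then (G q.1 - 1) p.2 q.2
        else if (p.1 : ℕ) = 0 ∧ (q.1 : ℕ) = r - 1 then ((1 : Matrix n n ℂ) - G q.1) p.2 q.2
        else 0
    T.det = (prodDesc G * (1 + prodDesc (fun i => (G i)⁻¹ - 1))).det := by
  intro T
  set B : Fin r → Matrix n n ℂ := fun i => (G i)⁻¹ - 1 with hBdef
  have hBG : ∀ k, B k * G k = 1 - G k := by
    intro k
    have h1 : (G k)⁻¹ * G k = 1 :=
      Matrix.nonsing_inv_mul _ ((Matrix.isUnit_iff_isUnit_det _).mp (hG k))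
    simp only [hBdef, sub_mul, one_mul, h1]
  have hrm : r - 1 < r := by omega
  set km : Fin r := ⟨r - 1, hrm⟩ with hkm
  set Bnat : ℕ → Matrix n n ℂ := fun k => if h : k < r then B ⟨k, h⟩ else 1 with hBnat
  set Qn : ℕ → Matrix n n ℂ := fun k => ((List.range k).reverse.map Bnat).prod with hQn
  have hQsucc : ∀ m, Qn (m + 1) = Bnat m * Qn m := by
    intro m
    simp [hQn, List.range_succ]
  have hQ0 : Qn 0 = 1 := by simp [hQn]
  -- block data
  set Tb : Fin r → Fin r → Matrix n n ℂ := fun i k =>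
    if i = k then G k
    else if (i : ℕ) = (k : ℕ) + 1 then G k - 1
    else if (i : ℕ) = 0 ∧ (k : ℕ) = r - 1 then 1 - G k
    else 0 with hTb
  set Kb : Fin r → Fin r → Matrix n n ℂ := fun i k =>
    if i = k then 1
    else if (i : ℕ) = (k : ℕ) + 1 then -(B k)
    else if (i : ℕ) = 0 ∧ (k : ℕ) = r - 1 then B k
    else 0 with hKb
  set Lb : Fin r → Fin r → Matrix n n ℂ := fun i k =>
    (if i = k then 1 else 0) + (if (i : ℕ) = (k : ℕ) + 1 then -(B k) else 0) with hLb
  set Ub : Fin r → Fin r → Matrix n n ℂ := fun i k =>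
    (if i = k then 1 else 0) + (if (k : ℕ) = r - 1 then Qn i * B k else 0) with hUb
  set Db : Fin r → Fin r → Matrix n n ℂ := fun i k =>
    if i = k then G k else 0 with hDb
  -- T = blift Tb
  have hT : T = blift Tb := by
    ext p q
    show _ = Tb p.1 q.1 p.2 q.2
    simp only [T, Matrix.of_apply, hTb]
    split_ifs <;> rfl
  -- K * D = T (blockwise)
  have hTKD : ∀ i k, ∑ j, Kb i j * Db j k = Tb i k := by
    intro i k
    have h1 : ∀ j, Kb i j * Db j k = if j = k then Kb i j * G k else 0 := by
      intro j
      simp only [hDb, mul_ite, mul_zero]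
    simp only [h1, Finset.sum_ite_eq' Finset.univ k (fun j => Kb i j * G k),
      Finset.mem_univ, if_true]
    simp only [hKb, hTb]
    split_ifs with h1 h2 h3
    · rw [one_mul]
    · rw [neg_mul, hBG, neg_sub]
    · rw [hBG]
    · rw [zero_mul]
  -- L * U = K (blockwise)
  have hKLU : ∀ i k, ∑ j, Lb i j * Ub j k = Kb i k := by
    intro i k
    have hsplit : ∑ j, Lb i j * Ub j k =
        (∑ j, (if i = j then Ub j k else 0)) +
        ∑ j : Fin r, (if (i : ℕ) = (j : ℕ) + 1 then -(B j) * Ub j k else 0) := by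
      rw [← Finset.sum_add_distrib]
      refine Finset.sum_congr rfl fun j _ => ?_
      simp only [hLb, add_mul, ite_mul, one_mul, zero_mul]
    rw [hsplit, Finset.sum_ite_eq Finset.univ i (fun j => Ub j k)]
    simp only [Finset.mem_univ, if_true]
    by_cases hi0 : (i : ℕ) = 0
    · have hz : ∑ j : Fin r, (if (i : ℕ) = (j : ℕ) + 1 then -(B j) * Ub j k else 0) = 0 := by
        refine Finset.sum_eq_zero fun j _ => ?_
        rw [if_neg (by omega)]
      rw [hz, add_zero]
      simp only [hUb, hKb]
      by_cases hk : (k : ℕ) = r - 1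
      · have hik : ¬ i = k := by
          rw [Fin.ext_iff]; omega
        have hQi : Qn (i : ℕ) = 1 := by rw [hi0, hQ0]
        rw [if_pos hk, if_neg hik, if_neg hik, if_neg (by omega), if_pos ⟨hi0, hk⟩,
          hQi, one_mul, zero_add]
      · rw [if_neg hk, add_zero]
        by_cases hik : i = k
        · rw [if_pos hik, if_pos hik]
        · rw [if_neg hik, if_neg hik, if_neg (by omega), if_neg (by tauto)]
    · -- i ≥ 1
      set jm : Fin r := ⟨(i : ℕ) - 1, by omega⟩ with hjm
      have hcond : ∀ j : Fin r, ((i : ℕ) = (j : ℕ) + 1) ↔ j = jm := by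
        intro j
        rw [Fin.ext_iff]
        show _ ↔ (j : ℕ) = (i : ℕ) - 1
        omega
      have hs2 : ∑ j : Fin r, (if (i : ℕ) = (j : ℕ) + 1 then -(B j) * Ub j k else 0)
          = -(B jm) * Ub jm k := by
        have : ∀ j : Fin r, (if (i : ℕ) = (j : ℕ) + 1 then -(B j) * Ub j k else 0)
            = (if j = jm then -(B j) * Ub j k else 0) := fun j =>
          if_congr (hcond j) rfl rfl
        simp only [this, Finset.sum_ite_eq' Finset.univ jm
          (fun j => -(B j) * Ub j k), Finset.mem_univ, if_true]
      rw [hs2]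
      have hQrec : Qn (i : ℕ) = B jm * Qn ((i : ℕ) - 1) := by
        have h1 : (i : ℕ) = ((i : ℕ) - 1) + 1 := by omega
        rw [h1, hQsucc]
        congr 1
        simp only [hBnat]
        rw [dif_pos (by omega : (i : ℕ) - 1 < r)]
      simp only [hUb, hKb]
      by_cases hk : (k : ℕ) = r - 1
      · have hjmk : ¬ jm = k := by
          rw [Fin.ext_iff]
          show ¬ (i : ℕ) - 1 = (k : ℕ)
          omega
        rw [if_pos hk, if_pos hk, if_neg hjmk, zero_add]
        have hcancel : Qn (i : ℕ) * B k + -(B jm) * (Qn ((jm : ℕ)) * B k) = 0 := by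
          have : (jm : ℕ) = (i : ℕ) - 1 := rfl
          rw [this, neg_mul, hQrec, mul_assoc, add_neg_cancel]
        by_cases hik : i = k
        · rw [if_pos hik, if_pos hik, add_assoc, hcancel, add_zero]
        · rw [if_neg hik, if_neg hik, if_neg (by omega), if_neg (by tauto), zero_add,
            hcancel]
      · have hik' : ¬ ((i : ℕ) = 0 ∧ (k : ℕ) = r - 1) := by tauto
        rw [if_neg hk, if_neg hk, add_zero, add_zero]
        by_cases hik : i = k
        · have hjmk : ¬ jm = k := by
            rw [Fin.ext_iff]
            show ¬ (i : ℕ) - 1 = (k : ℕ)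
            omega
          rw [if_pos hik, if_pos hik, if_neg hjmk, mul_zero, add_zero]
        · rw [if_neg hik, if_neg hik]
          by_cases hsub : (i : ℕ) = (k : ℕ) + 1
          · have hjmk : jm = k := by
              rw [Fin.ext_iff]
              show (i : ℕ) - 1 = (k : ℕ)
              omega
            rw [if_pos hsub, hjmk, if_pos rfl, mul_one, zero_add]
          · have hjmk : ¬ jm = k := by
              rw [Fin.ext_iff]
              show ¬ (i : ℕ) - 1 = (k : ℕ)
              omega
            rw [if_neg hsub, if_neg hik', if_neg hjmk, mul_zero, zero_add]
    -- end hKLU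
  have hKfact : blift Lb * blift Ub = blift Kb := by
    rw [blift_mul]
    exact congrArg blift (funext fun i => funext fun k => hKLU i k)
  have hTfact : T = blift Kb * blift Db := by
    rw [blift_mul, hT]
    exact congrArg blift (funext fun i => funext fun k => (hTKD i k).symm)
  -- determinants of the factors
  have hdetL : (blift Lb).det = 1 := by
    rw [det_blift_lower Lb (fun i k hik => by
      simp only [hLb]
      rw [if_neg (Fin.ne_of_lt hik), if_neg (by omega : ¬ (i : ℕ) = (k : ℕ) + 1),
        add_zero])]
    refine Finset.prod_eq_one fun a _ => ?_
    have : ¬ (a : ℕ) = (a : ℕ) + 1 := by omega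
    simp [hLb, this]
  have hdetU : (blift Ub).det = (1 + Qn (r - 1) * B km).det := by
    rw [det_blift_upper Ub (fun i k hki => by
      simp only [hUb]
      rw [if_neg (Fin.ne_of_gt hki), if_neg (by
        intro h
        have := i.isLt
        have := k.isLt
        omega : ¬ (k : ℕ) = r - 1), zero_add])]
    have hdiag : ∀ a : Fin r, (Ub a a).det =
        if a = km then (1 + Qn (r - 1) * B km).det else 1 := by
      intro a
      by_cases ha : a = km
      · subst ha
        have hv : (km : ℕ) = r - 1 := rfl
        simp [hUb, hv]
      · have hv : ¬ (a : ℕ) = r - 1 := fun h => ha (Fin.ext h)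
        simp [hUb, ha, hv]
    simp only [hdiag]
    rw [Finset.prod_ite_eq' Finset.univ km (fun _ => (1 + Qn (r - 1) * B km).det)]
    simp
  have hdetD : (blift Db).det = ∏ a : Fin r, (G a).det := by
    rw [det_blift_upper Db (fun i k hki => by
      simp only [hDb]
      rw [if_neg (Fin.ne_of_gt hki)])]
    refine Finset.prod_congr rfl fun a _ => ?_
    simp [hDb]
  -- determinant of prodDesc G
  have hdetProdG : (prodDesc G).det = ∏ a : Fin r, (G a).det := by
    rw [prodDesc, ← Matrix.coe_detMonoidHom, MonoidHom.map_list_prod,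
      List.map_map, List.map_reverse, List.prod_reverse, ← Fin.prod_univ_def]
    rfl
  -- prodDesc B = Bnat (r-1) * Qn (r-1)
  have hprodB : prodDesc B = B km * Qn (r - 1) := by
    have h1 : prodDesc B = Qn r := by
      rw [prodDesc, hQn]
      congr 1
      rw [List.map_reverse, List.map_reverse]
      congr 1
      have : (List.finRange r).map B = ((List.finRange r).map Fin.val).map Bnat := by
        rw [List.map_map]
        refine List.map_congr_left fun i _ => ?_
        show B i = Bnat (i : ℕ)
        simp only [hBnat]
        rw [dif_pos i.isLt, Fin.eta]
      rw [this, List.map_coe_finRange_eq_range]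
    rw [h1]
    conv_lhs => rw [show r = (r - 1) + 1 by omega]
    rw [hQsucc]
    congr 1
    simp only [hBnat]
    rw [dif_pos hrm]
  -- assemble
  rw [hTfact, det_mul, ← hKfact, det_mul, hdetL, hdetU, hdetD, one_mul]
  rw [Matrix.det_mul, hdetProdG]
  show Matrix.det (1 + Qn (r - 1) * B km) * _ = _
  rw [hprodB, Matrix.det_one_add_mul_comm, mul_comm]
end

section
/- (Stable inversion identity) Let B = U D V be an n×n complex matrix with U invertible, D invertible diagonal with positive real entries, V invertible. Write D = D₊ D₋ with D₊ = max(D, I) and D₋ = min(D, I) entrywise. If I + B is invertible, then (I + B)^{-1} = (D₊^{-1} U^{-1} + D₋ V)^{-1} D₊^{-1} U^{-1}. -/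
open Matrix

/-- Stable inversion identity: for `B = U D V` with `U, V` invertible and `D` diagonal
with positive entries, writing `D = D₊ D₋` with `D₊ = max(D, I)`, `D₋ = min(D, I)`, if
`I + B` is invertible then `(I + B)⁻¹ = (D₊⁻¹ U⁻¹ + D₋ V)⁻¹ D₊⁻¹ U⁻¹`. -/
theorem stable_inversion_identity {n : Type*} [Fintype n] [DecidableEq n]
    (U V : Matrix n n ℂ) (hU : IsUnit U) (hV : IsUnit V)
    (d : n → ℝ) (hd : ∀ k, 0 < d k) :
    let D : Matrix n n ℂ := Matrix.diagonal fun k => (d k : ℂ)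
    let Dp : Matrix n n ℂ := Matrix.diagonal fun k => ((max (d k) 1 : ℝ) : ℂ)
    let Dm : Matrix n n ℂ := Matrix.diagonal fun k => ((min (d k) 1 : ℝ) : ℂ)
    let B : Matrix n n ℂ := U * D * V
    IsUnit (1 + B) →
      (1 + B)⁻¹ = (Dp⁻¹ * U⁻¹ + Dm * V)⁻¹ * (Dp⁻¹ * U⁻¹) := by
  intro D Dp Dm B hB
  have hDp : IsUnit Dp := by
    rw [Matrix.isUnit_iff_isUnit_det, det_diagonal, isUnit_iff_ne_zero]
    refine Finset.prod_ne_zero_iff.mpr fun k _ => ?_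
    have : (0:ℝ) < max (d k) 1 := lt_max_of_lt_right one_pos
    simpa [Complex.ofReal_eq_zero] using this.ne'
  have hUDp : IsUnit (U * Dp) := hU.mul hDp
  -- key factorization
  have hkey : (U * Dp) * (Dp⁻¹ * U⁻¹ + Dm * V) = 1 + B := by
    have h1 : Dp * Dp⁻¹ = 1 := mul_nonsing_inv _ ((Matrix.isUnit_iff_isUnit_det _).mp hDp)
    have h2 : U * U⁻¹ = 1 := mul_nonsing_inv _ ((Matrix.isUnit_iff_isUnit_det _).mp hU)
    have h3 : Dp * Dm = D := by
      show Matrix.diagonal _ * Matrix.diagonal _ = Matrix.diagonal _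
      rw [Matrix.diagonal_mul_diagonal]
      exact congrArg Matrix.diagonal (funext fun k => by
        rw [← Complex.ofReal_mul, max_mul_min, mul_one])
    calc (U * Dp) * (Dp⁻¹ * U⁻¹ + Dm * V)
        = U * (Dp * Dp⁻¹) * U⁻¹ + U * (Dp * Dm) * V := by noncomm_ring
      _ = 1 + B := by rw [h1, h3, mul_one, h2]
  have hbr : IsUnit (Dp⁻¹ * U⁻¹ + Dm * V) := by
    have : Dp⁻¹ * U⁻¹ + Dm * V = (U * Dp)⁻¹ * (1 + B) := by
      rw [← hkey, ← mul_assoc, nonsing_inv_mul _ ((Matrix.isUnit_iff_isUnit_det _).mp hUDp), one_mul]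
    rw [this]
    exact (Matrix.isUnit_nonsing_inv_iff.mpr hUDp).mul hB
  rw [← hkey, Matrix.mul_inv_rev, Matrix.mul_inv_rev]
end

section
/- (Rank-2 untwisted moment) With ρ^{T₂} the untwisted fermionic partial transpose as above and X₂ = (-1)^{∑_{j∈A₂} n̂_j} the diagonal parity operator on subsystem A₂ (acting as X₂|n⟩ = (-1)^{τ₂(n)}|n⟩), one has Tr[(ρ^{T₂})²] = Tr(ρ X₂ ρ X₂) for every linear operator ρ on the Fock space. -/
open Matrix

variable {A₁ A₂ : Type*} [Fintype A₁] [DecidableEq A₁] [Fintype A₂] [DecidableEq A₂]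

/-- Number of occupied modes in subsystem `A₁` of the occupation bit string `n`. -/
def tau1 (n : A₁ ⊕ A₂ → Bool) : ℕ := ∑ a : A₁, if n (Sum.inl a) then 1 else 0

/-- Number of occupied modes in subsystem `A₂` of the occupation bit string `n`. -/
def tau2 (n : A₁ ⊕ A₂ → Bool) : ℕ := ∑ b : A₂, if n (Sum.inr b) then 1 else 0

/-- The bit string taking its `A₁` part from `m` and its `A₂` part from `m'`. -/
def mix (m m' : A₁ ⊕ A₂ → Bool) : A₁ ⊕ A₂ → Bool :=
  fun x => match x with
  | Sum.inl a => m (Sum.inl a)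
  | Sum.inr b => m' (Sum.inr b)

/-- The phase `(-1)^{φ(n,n̄)}` with
`φ(n,n̄) = ((τ₂+τ̄₂) mod 2)/2 + (τ₁+τ̄₁)(τ₂+τ̄₂)`; the half-integer first term is the
phase `i^{(τ₂+τ̄₂) mod 2}`. -/
noncomputable def fptPhase (n n' : A₁ ⊕ A₂ → Bool) : ℂ :=
  Complex.I ^ ((tau2 n + tau2 n') % 2) *
    (-1 : ℂ) ^ ((tau1 n + tau1 n') * (tau2 n + tau2 n'))

/-- The untwisted fermionic partial transpose of an operator on the Fock space,
`(|n₁,n₂⟩⟨n̄₁,n̄₂|)^{T₂} = (-1)^{φ(n,n̄)} |n₁,n̄₂⟩⟨n̄₁,n₂|`. -/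
noncomputable def fpt (ρ : Matrix (A₁ ⊕ A₂ → Bool) (A₁ ⊕ A₂ → Bool) ℂ) :
    Matrix (A₁ ⊕ A₂ → Bool) (A₁ ⊕ A₂ → Bool) ℂ :=
  Matrix.of fun m m' => fptPhase (mix m m') (mix m' m) * ρ (mix m m') (mix m' m)


/-- The diagonal parity operator on subsystem `A₂`: `X₂|n⟩ = (-1)^{τ₂(n)}|n⟩`. -/
noncomputable def X2 : Matrix (A₁ ⊕ A₂ → Bool) (A₁ ⊕ A₂ → Bool) ℂ :=
  Matrix.diagonal fun n => (-1 : ℂ) ^ (tau2 n)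


lemma mix_mix (m m' : A₁ ⊕ A₂ → Bool) : mix (mix m m') (mix m' m) = m := by
  funext x; cases x <;> rfl

lemma neg_one_pow_mod_two (a : ℕ) : (-1 : ℂ) ^ (a % 2) = (-1 : ℂ) ^ a := by
  conv_rhs => rw [← Nat.mod_add_div a 2, pow_add, pow_mul]
  simp

lemma phase_mul (n n' : A₁ ⊕ A₂ → Bool) :
    fptPhase n n' * fptPhase n' n = (-1 : ℂ) ^ (tau2 n') * (-1 : ℂ) ^ (tau2 n) := by
  unfold fptPhase
  rw [add_comm (tau2 n') (tau2 n), add_comm (tau1 n') (tau1 n)]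
  have h : Complex.I ^ ((tau2 n + tau2 n') % 2) * Complex.I ^ ((tau2 n + tau2 n') % 2)
      = (-1 : ℂ) ^ (tau2 n + tau2 n') := by
    rw [← pow_add, ← two_mul, pow_mul, ← neg_one_pow_mod_two]
    norm_num [Complex.I_sq]
  have h2 : ((-1 : ℂ) ^ ((tau1 n + tau1 n') * (tau2 n + tau2 n'))) *
      ((-1 : ℂ) ^ ((tau1 n + tau1 n') * (tau2 n + tau2 n'))) = 1 := by
    rw [← pow_add, ← two_mul, pow_mul]
    norm_num
  calc _ = (Complex.I ^ ((tau2 n + tau2 n') % 2) * Complex.I ^ ((tau2 n + tau2 n') % 2)) *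
        (((-1 : ℂ) ^ ((tau1 n + tau1 n') * (tau2 n + tau2 n'))) *
          ((-1 : ℂ) ^ ((tau1 n + tau1 n') * (tau2 n + tau2 n')))) := by ring
    _ = (-1 : ℂ) ^ (tau2 n + tau2 n') := by rw [h, h2, mul_one]
    _ = _ := by rw [pow_add]; ring

/-- Rank-2 untwisted moment: `Tr[(ρ^{T₂})²] = Tr(ρ X₂ ρ X₂)` for every linear operator
`ρ` on the Fock space. -/
theorem trace_fpt_sq (ρ : Matrix (A₁ ⊕ A₂ → Bool) (A₁ ⊕ A₂ → Bool) ℂ) :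
    (fpt ρ * fpt ρ).trace = (ρ * X2 * ρ * X2).trace := by
  have hL : (fpt ρ * fpt ρ).trace
      = ∑ p : (A₁ ⊕ A₂ → Bool) × (A₁ ⊕ A₂ → Bool),
          fpt ρ p.1 p.2 * fpt ρ p.2 p.1 := by
    rw [Matrix.trace, Fintype.sum_prod_type]
    simp only [Matrix.diag, Matrix.mul_apply]
  have hR : (ρ * X2 * ρ * X2).trace
      = ∑ p : (A₁ ⊕ A₂ → Bool) × (A₁ ⊕ A₂ → Bool),
          (ρ p.1 p.2 * (-1 : ℂ) ^ (tau2 p.2)) * (ρ p.2 p.1 * (-1 : ℂ) ^ (tau2 p.1)) := by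
    have h1 : ∀ (M : Matrix (A₁ ⊕ A₂ → Bool) (A₁ ⊕ A₂ → Bool) ℂ),
        M * X2 = Matrix.of fun i j => M i j * (-1 : ℂ) ^ (tau2 j) := fun M => by
      ext i j; simp [X2, Matrix.mul_diagonal]
    rw [h1, h1, Matrix.trace, Fintype.sum_prod_type]
    simp only [Matrix.diag, Matrix.of_apply, Matrix.mul_apply, Finset.sum_mul]
    exact Finset.sum_congr rfl fun i _ => Finset.sum_congr rfl fun j _ => by ring
  rw [hL, hR]
  refine Fintype.sum_equiv
    ⟨fun p => (mix p.1 p.2, mix p.2 p.1), fun p => (mix p.1 p.2, mix p.2 p.1),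
      fun p => by simp [mix_mix], fun p => by simp [mix_mix]⟩ _ _ (fun p => ?_)
  simp only [Equiv.coe_fn_mk, fpt, Matrix.of_apply, mix_mix]
  rw [show fptPhase (mix p.1 p.2) (mix p.2 p.1) * ρ (mix p.1 p.2) (mix p.2 p.1) *
      (fptPhase (mix p.2 p.1) (mix p.1 p.2) * ρ (mix p.2 p.1) (mix p.1 p.2))
    = (fptPhase (mix p.1 p.2) (mix p.2 p.1) * fptPhase (mix p.2 p.1) (mix p.1 p.2)) *
      (ρ (mix p.1 p.2) (mix p.2 p.1) * ρ (mix p.2 p.1) (mix p.1 p.2)) from by ring,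
    phase_mul]
  ring
end
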